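/- Let n ≥ 2 and let A = (a_{i,j}) be an n×n matrix with entries in {0,1} such that row n has exactly two nonzero entries, located in columns n−1 and n. Let A′ be the (n−1)×(n−1) matrix obtained from A by replacing column n−1 by the column with entries a′_{j,n−1} = max(a_{j,n−1}, a_{j,n}) for j ∈ {1,…,n−1} and then deleting row n and column n (the bicontraction of A at row n). Let Y₃ be the set of all permutations σ ∈ S_n with a_{i,σ(i)} = 1 for all i and with a_{σ⁻¹(c′),σ(n)} = 1, where c′ is the element of {n−1,n} other than σ(n). Then 2·perm(A′) = 2·perm(A) − |Y₃|. In particular, if no row j ∈ {1,…,n−1} has a_{j,n−1} = a_{j,n} = 1, then perm(A′) = perm(A). -/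

import Mathlib

open SimpleGraph

namespace PaperMM

/-- A (finite, simple) graph bundled with its vertex type. -/
structure Graph : Type 1 where
  V : Type
  adj : SimpleGraph V

/-- `G` has a perfect matching. -/
def HasPM {V : Type} (G : SimpleGraph V) : Prop :=
  ∃ M : G.Subgraph, M.IsPerfectMatching

/-- `X ⊆ V(G)` is conformal: `G − X` has a perfect matching. -/
def ConformalSet {V : Type} (G : SimpleGraph V) (X : Set V) : Prop :=
  HasPM (G.induce Xᶜ)

/-- The result of bicontracting the degree-2 vertex `v` with neighbours `u₀, u₁`:
the three vertices are identified into (the vertex previously called) `v`,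
loops and parallel edges being suppressed. -/
def bicontractAt {V : Type} (G : SimpleGraph V) (v u₀ u₁ : V) :
    SimpleGraph {x : V // x ≠ u₀ ∧ x ≠ u₁} where
  Adj a b :=
    (a.1 ≠ v ∧ b.1 ≠ v ∧ G.Adj a.1 b.1) ∨
    (a.1 = v ∧ b.1 ≠ v ∧ (G.Adj b.1 u₀ ∨ G.Adj b.1 u₁)) ∨
    (b.1 = v ∧ a.1 ≠ v ∧ (G.Adj a.1 u₀ ∨ G.Adj a.1 u₁))
  symm := by
    constructor
    rintro a b (⟨h1, h2, h3⟩ | ⟨h1, h2, h3⟩ | ⟨h1, h2, h3⟩)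
    · exact Or.inl ⟨h2, h1, h3.symm⟩
    · exact Or.inr (Or.inr ⟨h1, h2, h3⟩)
    · exact Or.inr (Or.inl ⟨h1, h2, h3⟩)
  loopless := by
    constructor
    rintro a (⟨h1, _h2, h3⟩ | ⟨h1, h2, _h3⟩ | ⟨h1, h2, _h3⟩)
    · exact G.irrefl h3
    · exact h2 h1
    · exact h2 h1

/-- `H` is obtained from `G` by a single bicontraction of a vertex of degree two. -/
def Bicontract (G H : Graph) : Prop :=
  ∃ v u₀ u₁ : G.V, u₀ ≠ u₁ ∧ G.adj.neighborSet v = {u₀, u₁} ∧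
    Nonempty (H.adj ≃g bicontractAt G.adj v u₀ u₁)

/-- `H` is a matching minor of `G`: a graph isomorphic to `H` can be obtained from
a conformal subgraph of `G` by repeated bicontractions. -/
def IsMatchingMinor (H G : Graph) : Prop :=
  ∃ (H' : G.adj.Subgraph) (K : Graph),
    ConformalSet G.adj H'.verts ∧
    Relation.ReflTransGen Bicontract ⟨↥H'.verts, H'.coe⟩ K ∧
    Nonempty (H.adj ≃g K.adj)

/-- The edge cut `∂(X)`: all edges of `G` with exactly one endpoint in `X`. -/
def edgeCut {V : Type} (G : SimpleGraph V) (X : Set V) : Set (Sym2 V) :=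
  {e | e ∈ G.edgeSet ∧ ∃ a b : V, e = s(a, b) ∧ a ∈ X ∧ b ∉ X}

/-- `∂(X)` is a tight cut: every perfect matching contains exactly one of its edges. -/
def IsTightCut {V : Type} (G : SimpleGraph V) (X : Set V) : Prop :=
  ∀ M : G.Subgraph, M.IsPerfectMatching → (M.edgeSet ∩ edgeCut G X).ncard = 1

/-- `G` is matching covered: connected and every edge lies in a perfect matching. -/
def MatchingCovered {V : Type} (G : SimpleGraph V) : Prop :=
  G.Connected ∧ ∀ e ∈ G.edgeSet, ∃ M : G.Subgraph, M.IsPerfectMatching ∧ e ∈ M.edgeSet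

/-- `(V₁, V₂)` is a bipartition of `G` into two independent sets. -/
def IsBipartition {V : Type} (G : SimpleGraph V) (V₁ V₂ : Set V) : Prop :=
  V₁ ∪ V₂ = Set.univ ∧ V₁ ∩ V₂ = ∅ ∧
    ∀ a b : V, G.Adj a b → ((a ∈ V₁ ∧ b ∈ V₂) ∨ (a ∈ V₂ ∧ b ∈ V₁))

def IsBipartiteGraph {V : Type} (G : SimpleGraph V) : Prop :=
  ∃ V₁ V₂ : Set V, IsBipartition G V₁ V₂

/-- A brace: a bipartite matching covered graph with no non-trivial tight cut. -/
def IsBrace {V : Type} (G : SimpleGraph V) : Prop :=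
  IsBipartiteGraph G ∧ MatchingCovered G ∧
    ¬ ∃ X : Set V, IsTightCut G X ∧ 2 ≤ X.ncard ∧ 2 ≤ Xᶜ.ncard

/-- A perfect matching decomposition: a cubic tree `tree` together with a bijection
from its leaves to the vertices of `G`. -/
structure PMDecomp {V : Type} (G : SimpleGraph V) where
  T : Type
  tree : SimpleGraph T
  isTree : tree.IsTree
  cubic : ∀ t : T, (tree.neighborSet t).ncard = 1 ∨ (tree.neighborSet t).ncard = 3
  leafEquiv : {t : T // (tree.neighborSet t).ncard = 1} ≃ V

/-- The side of the partition of `V(G)` induced by the tree edge `{t₁, t₂}`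
corresponding to `t₁`. -/
def PMDecomp.sideSet {V : Type} {G : SimpleGraph V} (D : PMDecomp G) (t₁ t₂ : D.T) :
    Set V :=
  {v | (D.tree.deleteEdges {s(t₁, t₂)}).Reachable t₁ (D.leafEquiv.symm v).1}

/-- The matching porosity of `X`: the maximum number of edges of `∂(X)` in a
perfect matching of `G`. -/
noncomputable def matchingPorosity {V : Type} (G : SimpleGraph V) (X : Set V) : ℕ :=
  sSup {n | ∃ M : G.Subgraph, M.IsPerfectMatching ∧ n = (M.edgeSet ∩ edgeCut G X).ncard}

/-- The width of a perfect matching decomposition. -/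
noncomputable def PMDecomp.width {V : Type} {G : SimpleGraph V} (D : PMDecomp G) : ℕ :=
  sSup {n | ∃ t₁ t₂ : D.T, D.tree.Adj t₁ t₂ ∧ n = matchingPorosity G (D.sideSet t₁ t₂)}

/-- The perfect matching width of `G`. -/
noncomputable def pmw {V : Type} (G : SimpleGraph V) : ℕ :=
  sInf {w | ∃ D : PMDecomp G, D.width ≤ w}

/-! ### Concrete graphs -/

/-- The `(n × m)`-grid. -/
def gridGraph (n m : ℕ) : SimpleGraph (Fin n × Fin m) :=
  SimpleGraph.fromRel (fun p q =>
    (p.1 = q.1 ∧ p.2.1 + 1 = q.2.1) ∨ (p.2 = q.2 ∧ p.1.1 + 1 = q.1.1))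

/-- The single-crossing matching grid of order `k`: the `(2k × 2k)`-grid whose
central 4-cycle (`(k,k),(k,k+1),(k+1,k+1),(k+1,k)` in 1-based coordinates) is
identified with a 4-cycle of `K_{3,3}`; `Sum.inr 0` and `Sum.inr 1` are the two
remaining vertices of `K_{3,3}`. -/
def singleCrossingMatchingGrid (k : ℕ) :
    SimpleGraph ((Fin (2*k) × Fin (2*k)) ⊕ Fin 2) :=
  SimpleGraph.fromRel (fun x y =>
    (∃ p q : Fin (2*k) × Fin (2*k), x = Sum.inl p ∧ y = Sum.inl q ∧
      ((p.1 = q.1 ∧ p.2.1 + 1 = q.2.1) ∨ (p.2 = q.2 ∧ p.1.1 + 1 = q.1.1))) ∨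
    (∃ p : Fin (2*k) × Fin (2*k), x = Sum.inl p ∧ y = Sum.inr 0 ∧
      ((p.1.1 = k - 1 ∧ p.2.1 = k) ∨ (p.1.1 = k ∧ p.2.1 = k - 1))) ∨
    (∃ p : Fin (2*k) × Fin (2*k), x = Sum.inl p ∧ y = Sum.inr 1 ∧
      ((p.1.1 = k - 1 ∧ p.2.1 = k - 1) ∨ (p.1.1 = k ∧ p.2.1 = k))) ∨
    (x = Sum.inr 0 ∧ y = Sum.inr 1))

/-- The inside-out single-crossing matching grid of order `k`: the `(2k × 2k)`-grid
together with the two remaining vertices of a `K_{3,3}` whose chosen 4-cycle has been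
identified with the four corners (its edges being deleted). -/
def insideOutSingleCrossingMatchingGrid (k : ℕ) :
    SimpleGraph ((Fin (2*k) × Fin (2*k)) ⊕ Fin 2) :=
  SimpleGraph.fromRel (fun x y =>
    (∃ p q : Fin (2*k) × Fin (2*k), x = Sum.inl p ∧ y = Sum.inl q ∧
      ((p.1 = q.1 ∧ p.2.1 + 1 = q.2.1) ∨ (p.2 = q.2 ∧ p.1.1 + 1 = q.1.1))) ∨
    (∃ p : Fin (2*k) × Fin (2*k), x = Sum.inl p ∧ y = Sum.inr 0 ∧
      ((p.1.1 = 0 ∧ p.2.1 = 2*k - 1) ∨ (p.1.1 = 2*k - 1 ∧ p.2.1 = 0))) ∨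
    (∃ p : Fin (2*k) × Fin (2*k), x = Sum.inl p ∧ y = Sum.inr 1 ∧
      ((p.1.1 = 0 ∧ p.2.1 = 0) ∨ (p.1.1 = 2*k - 1 ∧ p.2.1 = 2*k - 1))) ∨
    (x = Sum.inr 0 ∧ y = Sum.inr 1))

/-- The cylindrical matching grid `CG_k` of order `k` (0-based coordinates:
vertex `(i, j)` is `v_{j+1}^{i+1}` of the paper). -/
def cylindricalMatchingGrid (k : ℕ) : SimpleGraph (Fin k × Fin (4*k)) :=
  SimpleGraph.fromRel (fun x y =>
    (x.1 = y.1 ∧ (x.2.1 + 1) % (4*k) = y.2.1) ∨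
    (x.1.1 + 1 = y.1.1 ∧ x.2.1 % 4 = 0 ∧ x.2.1 + 1 = y.2.1) ∨
    (y.1.1 + 1 = x.1.1 ∧ x.2.1 % 4 = 2 ∧ x.2.1 + 1 = y.2.1))

/-- The edges of the canonical matching of `CG_k`. -/
def cmgCanonicalEdges (k : ℕ) : Set (Sym2 (Fin k × Fin (4*k))) :=
  {e | ∃ x y : Fin k × Fin (4*k), e = s(x, y) ∧ x.1 = y.1 ∧
        x.2.1 % 2 = 0 ∧ x.2.1 + 1 = y.2.1}

/-- The edges of the alternating matching of `CG_k` (for `k` even): the canonical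
matching with `M ∩ E(C_i)` replaced by `E(C_i) ∖ M` on every odd (1-based) cycle. -/
def cmgAlternatingEdges (k : ℕ) : Set (Sym2 (Fin k × Fin (4*k))) :=
  {e | ∃ x y : Fin k × Fin (4*k), e = s(x, y) ∧ x.1 = y.1 ∧
        (x.2.1 + 1) % (4*k) = y.2.1 ∧ (x.1.1 + x.2.1) % 2 = 1}

/-- The cylindrical single-crossing grid of order `h`: `CG_{4h}` plus the two
crossing edges `v^1_1 v^1_{8h+4}` and `v^1_{4h+1} v^1_{12h+4}`. -/
def cylindricalSingleCrossingGrid (h : ℕ) :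
    SimpleGraph (Fin (4*h) × Fin (4*(4*h))) :=
  cylindricalMatchingGrid (4*h) ⊔ SimpleGraph.fromRel (fun x y =>
    x.1.1 = 0 ∧ y.1.1 = 0 ∧
      ((x.2.1 = 0 ∧ y.2.1 = 8*h + 3) ∨ (x.2.1 = 4*h ∧ y.2.1 = 12*h + 3)))

/-- The cylindrical single-jump grid of order `k`: `CG_k` plus the edge `v^k_1 v^1_2`. -/
def cylindricalSingleJumpGrid (k : ℕ) : SimpleGraph (Fin k × Fin (4*k)) :=
  cylindricalMatchingGrid k ⊔ SimpleGraph.fromRel (fun x y =>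
    x.1.1 = k - 1 ∧ x.2.1 = 0 ∧ y.1.1 = 0 ∧ y.2.1 = 1)

/-- The shallow vortex matching grid `SVMG_k` of order `k`. -/
def shallowVortexMatchingGrid (k : ℕ) : SimpleGraph (Fin (2*k) × Fin (8*k)) :=
  SimpleGraph.fromRel (fun x y =>
    (x.1 = y.1 ∧ (x.2.1 + 1) % (8*k) = y.2.1) ∨
    (x.1.1 + 1 = y.1.1 ∧ x.2.1 % 4 = 0 ∧ x.2.1 + 1 = y.2.1) ∨
    (y.1.1 + 1 = x.1.1 ∧ x.2.1 % 4 = 2 ∧ x.2.1 + 1 = y.2.1) ∨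
    (x.1.1 = 0 ∧ y.1.1 = 0 ∧ x.2.1 % 4 = 1 ∧ (x.2.1 + 5) % (8*k) = y.2.1))

/-- The refined vortex `RV_k` of order `k`. -/
def refinedVortex (k : ℕ) : SimpleGraph (Fin (2*k) × Fin (4*k)) :=
  SimpleGraph.fromRel (fun x y =>
    (x.1 = y.1 ∧ (x.2.1 + 1) % (4*k) = y.2.1) ∨
    (x.1.1 + 1 = y.1.1 ∧ x.2 = y.2) ∨
    (x.1.1 = 0 ∧ y.1.1 = 0 ∧ x.2.1 % 4 = 1 ∧ (x.2.1 + 3) % (4*k) = y.2.1))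

/-- The (ordinary) single-crossing grid of order `n`: the `(2n × 2n)`-grid plus the
two crossing edges `{(n,n),(n+1,n+1)}` and `{(n,n+1),(n+1,n)}` (1-based). -/
def singleCrossingGrid (n : ℕ) : SimpleGraph (Fin (2*n) × Fin (2*n)) :=
  gridGraph (2*n) (2*n) ⊔ SimpleGraph.fromRel (fun p q =>
    (p.1.1 = n - 1 ∧ p.2.1 = n - 1 ∧ q.1.1 = n ∧ q.2.1 = n) ∨
    (p.1.1 = n - 1 ∧ p.2.1 = n ∧ q.1.1 = n ∧ q.2.1 = n - 1))

/-! ### M-conformality -/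

/-- `X` is `M`-conformal: every vertex outside `X` is matched by `M` to a vertex
outside `X`, i.e. `M ∩ E(G − X)` is a perfect matching of `G − X`. -/
def MConformalSet {V : Type} {G : SimpleGraph V} (M : G.Subgraph) (X : Set V) : Prop :=
  ∀ v ∈ Xᶜ, ∃ w ∈ Xᶜ, M.Adj v w

/-- A walk is internally `M`-conformal: it alternates between edges outside `M`
and edges of `M`, starting and ending with edges not in `M`. -/
def InternallyMConformal {V : Type} {G : SimpleGraph V} (M : G.Subgraph)
    {a b : V} (P : G.Walk a b) : Prop :=
  ∀ (i : ℕ) (h : i < P.edges.length), (P.edges.get ⟨i, h⟩ ∈ M.edgeSet ↔ i % 2 = 1)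

/-! ### Subdivisions -/

/-- A model of a subdivision of `H` inside `B`: branch vertices together with
internally disjoint paths representing the edges of `H`. -/
structure SubdivisionModel {V U : Type} (B : SimpleGraph V) (H : SimpleGraph U) where
  branch : U → V
  branch_inj : Function.Injective branch
  path : ∀ ⦃u w : U⦄, H.Adj u w → B.Walk (branch u) (branch w)
  path_isPath : ∀ ⦃u w : U⦄ (h : H.Adj u w), (path h).IsPath
  path_symm : ∀ ⦃u w : U⦄ (h : H.Adj u w), path h.symm = (path h).reverse
  branch_meet : ∀ ⦃u w : U⦄ (h : H.Adj u w) (z : U),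
      branch z ∈ (path h).support → z = u ∨ z = w
  path_disjoint : ∀ ⦃u w u' w' : U⦄ (h : H.Adj u w) (h' : H.Adj u' w'),
      s(u, w) ≠ s(u', w') → ∀ x : V, x ∈ (path h).support → x ∈ (path h').support →
        (x = branch u ∨ x = branch w) ∧ (x = branch u' ∨ x = branch w')

/-- The vertices of the subdivision in the host graph. -/
def SubdivisionModel.verts {V U : Type} {B : SimpleGraph V} {H : SimpleGraph U}
    (S : SubdivisionModel B H) : Set V :=
  {x | ∃ u w : U, ∃ h : H.Adj u w, x ∈ (S.path h).support}

/-- The edges of the subdivision in the host graph. -/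
def SubdivisionModel.edges' {V U : Type} {B : SimpleGraph V} {H : SimpleGraph U}
    (S : SubdivisionModel B H) : Set (Sym2 V) :=
  {e | ∃ u w : U, ∃ h : H.Adj u w, e ∈ (S.path h).edges}

/-- A model of a bisubdivision: every edge of `H` is replaced by a path of odd
length (i.e. every edge is subdivided an even number of times). -/
structure BisubdivisionModel {V U : Type} (B : SimpleGraph V) (H : SimpleGraph U)
    extends SubdivisionModel B H where
  path_odd : ∀ ⦃u w : U⦄ (h : H.Adj u w), Odd (path h).length

/-- `M` contains the canonical matching of the (bi)subdivision `S` of `CG_N`: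
`M ∩ E(W)` is a perfect matching of `W` in which every branch vertex is matched
along the subdivided image of the canonical-matching edge at the corresponding
grid vertex. -/
def ContainsCanonical {V : Type} {B : SimpleGraph V} {N : ℕ}
    (S : SubdivisionModel B (cylindricalMatchingGrid N)) (M : B.Subgraph) : Prop :=
  (∀ x ∈ S.verts, ∃ y ∈ S.verts, M.Adj x y ∧ s(x, y) ∈ S.edges') ∧
  (∀ (u : Fin N × Fin (4*N)) (y : V), M.Adj (S.branch u) y →
    ∃ w : Fin N × Fin (4*N), ∃ h : (cylindricalMatchingGrid N).Adj u w,
      s(u, w) ∈ cmgCanonicalEdges N ∧ s(S.branch u, y) ∈ (S.path h).edges)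

/-- The vertex set, in the host graph, of the subdivided image of the `j`-th
(0-based) concentric cycle of `CG_N`. -/
def cycVerts {V : Type} {B : SimpleGraph V} {N : ℕ}
    (S : SubdivisionModel B (cylindricalMatchingGrid N)) (j : ℕ) : Set V :=
  {x | ∃ u w : Fin N × Fin (4*N), ∃ h : (cylindricalMatchingGrid N).Adj u w,
      u.1.1 = j ∧ w.1.1 = j ∧ x ∈ (S.path h).support}

/-! ### Separations, minors, connectivity -/

/-- `(A, B)` is a separation of `G`. -/
def IsSeparation {V : Type} (G : SimpleGraph V) (A B : Set V) : Prop :=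
  A ∪ B = Set.univ ∧ ∀ a b : V, G.Adj a b → a ∈ A \ B → b ∉ B \ A

/-- `H` is a minor of `G` (branch-set model). -/
def IsMinor {U V : Type} (H : SimpleGraph U) (G : SimpleGraph V) : Prop :=
  ∃ φ : U → Set V,
    (∀ u, (φ u).Nonempty) ∧
    (∀ u, ∀ x, ∀ hx : x ∈ φ u, ∀ y, ∀ hy : y ∈ φ u,
      (G.induce (φ u)).Reachable ⟨x, hx⟩ ⟨y, hy⟩) ∧
    (Pairwise fun u w => Disjoint (φ u) (φ w)) ∧
    (∀ u w : U, H.Adj u w → ∃ x ∈ φ u, ∃ y ∈ φ w, G.Adj x y)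

/-- `G` is quasi-4-connected: 3-connected and every separation of order 3 has a
side containing at most one extra vertex. -/
def QuasiFourConnected {V : Type} (G : SimpleGraph V) : Prop :=
  (4 ≤ Nat.card V ∧
    ∀ A B : Set V, IsSeparation G A B → (A ∩ B).ncard ≤ 2 → A ⊆ B ∨ B ⊆ A) ∧
  (∀ A B : Set V, IsSeparation G A B → (A ∩ B).ncard = 3 →
    (A \ B).ncard ≤ 1 ∨ (B \ A).ncard ≤ 1)

/-! ### Walls -/

/-- The `(2n × n)`-grid with every odd edge of every odd column and every even edge
of every even column deleted (1-based parities). -/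
def preWall (n : ℕ) : SimpleGraph (Fin (2*n) × Fin n) :=
  SimpleGraph.fromRel (fun p q =>
    (p.1 = q.1 ∧ p.2.1 + 1 = q.2.1) ∨
    (p.2 = q.2 ∧ p.1.1 + 1 = q.1.1 ∧ ¬ p.1.1 % 2 = p.2.1 % 2))

/-- The vertices of the elementary `n`-wall: all vertices of `preWall n` of degree
at least two. -/
def elementaryWallVerts (n : ℕ) : Set (Fin (2*n) × Fin n) :=
  {v | 2 ≤ ((preWall n).neighborSet v).ncard}

/-- The elementary `n`-wall. -/
def elementaryWall (n : ℕ) : SimpleGraph ↥(elementaryWallVerts n) :=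
  (preWall n).induce (elementaryWallVerts n)

/-- The vertices on the perimeter of the elementary `n`-wall. -/
def wallPerimSet (n : ℕ) : Set (Fin (2*n) × Fin n) :=
  {v | v.1.1 = 0 ∨ v.1.1 = 2*n - 1 ∨ v.2.1 = 0 ∨ v.2.1 = n - 1}

/-- The (1-based) index of the concentric cycle of the centred layering of the
elementary `n`-wall containing a given vertex. -/
def wallRingIdx (n : ℕ) (v : Fin (2*n) × Fin n) : ℕ :=
  max ((if v.1.1 < n then n - 1 - v.1.1 else v.1.1 - n) / 2)
      (if v.2.1 < n / 2 then n / 2 - 1 - v.2.1 else v.2.1 - n / 2) + 1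

/-- The vertex set, in the host graph, of the `r`-th concentric cycle of a wall
given by a subdivision model. -/
def wallRingVertsG {V : Type} {G : SimpleGraph V} {n : ℕ}
    (S : SubdivisionModel G (elementaryWall n)) (r : ℕ) : Set V :=
  {x | ∃ u w, ∃ h : (elementaryWall n).Adj u w,
      wallRingIdx n u.1 = r ∧ wallRingIdx n w.1 = r ∧ x ∈ (S.path h).support}

/-- The vertex set, in the host graph, of the union of the first `r` concentric
cycles of a wall given by a subdivision model. -/
def wallInnerVertsG {V : Type} {G : SimpleGraph V} {n : ℕ}
    (S : SubdivisionModel G (elementaryWall n)) (r : ℕ) : Set V :=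
  {x | ∃ u w, ∃ h : (elementaryWall n).Adj u w,
      wallRingIdx n u.1 = wallRingIdx n w.1 ∧ wallRingIdx n u.1 ≤ r ∧
      x ∈ (S.path h).support}

/-- The vertex set, in the host graph, of the perimeter of a wall given by a
subdivision model. -/
def wallPerimVertsG {V : Type} {G : SimpleGraph V} {n : ℕ}
    (S : SubdivisionModel G (elementaryWall n)) : Set V :=
  {x | ∃ u w, ∃ h : (elementaryWall n).Adj u w,
      u.1 ∈ wallPerimSet n ∧ w.1 ∈ wallPerimSet n ∧ x ∈ (S.path h).support}

/-- The (1-based) index of the concentric cycle of the centred layering of the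
`(n × n)`-grid (`n` even) containing a given vertex. -/
def gridRing (n : ℕ) (p : Fin n × Fin n) : ℕ :=
  max (if p.1.1 < n / 2 then n / 2 - 1 - p.1.1 else p.1.1 - n / 2)
      (if p.2.1 < n / 2 then n / 2 - 1 - p.2.1 else p.2.1 - n / 2) + 1

/-! ### Matrices and permanents -/

/-- The permanent of an `n × n` matrix of naturals. -/
def perm (n : ℕ) (A : Matrix (Fin n) (Fin n) ℕ) : ℕ :=
  ∑ σ : Equiv.Perm (Fin n), ∏ i : Fin n, A i (σ i)

/-- The bipartite graph `B(A)` associated with a 0/1 matrix `A`: two copies of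
`{1,…,n}`, with `uᵢ` adjacent to `wⱼ` iff `A i j = 1`. -/
def matrixGraph (n : ℕ) (A : Matrix (Fin n) (Fin n) ℕ) :
    SimpleGraph (Fin n ⊕ Fin n) :=
  SimpleGraph.fromRel (fun x y => ∃ i j : Fin n, x = Sum.inl i ∧ y = Sum.inr j ∧ A i j = 1)

/-- The last index of `Fin n` (row/column `n`). -/
def lastIdx (n : ℕ) (_hn : 2 ≤ n) : Fin n := ⟨n - 1, by omega⟩

/-- The second-to-last index of `Fin n` (row/column `n − 1`). -/
def sndIdx (n : ℕ) (_hn : 2 ≤ n) : Fin n := ⟨n - 2, by omega⟩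

/-- The bicontraction of `A` at its last row: replace column `n−1` by the entrywise
maximum of columns `n−1` and `n`, then delete row `n` and column `n`. -/
def bicontractMatrix (n : ℕ) (hn : 2 ≤ n) (A : Matrix (Fin n) (Fin n) ℕ) :
    Matrix (Fin (n-1)) (Fin (n-1)) ℕ :=
  fun j i =>
    if (i : ℕ) = n - 2 then
      max (A (Fin.castLE (Nat.sub_le n 1) j) (sndIdx n hn))
          (A (Fin.castLE (Nat.sub_le n 1) j) (lastIdx n hn))
    else A (Fin.castLE (Nat.sub_le n 1) j) (Fin.castLE (Nat.sub_le n 1) i)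

end PaperMM
namespace PaperMM

open Finset in
lemma perm_eq_card_aux (n : ℕ) (A : Matrix (Fin n) (Fin n) ℕ)
    (h01 : ∀ i j, A i j = 0 ∨ A i j = 1) :
    perm n A
      = (Finset.univ.filter fun σ : Equiv.Perm (Fin n) => ∀ i, A i (σ i) = 1).card := by
  rw [Finset.card_filter, perm]
  refine Finset.sum_congr rfl fun σ _ => ?_
  by_cases h : ∀ i, A i (σ i) = 1
  · rw [if_pos h, Finset.prod_eq_one fun i _ => h i]
  · rw [if_neg h]
    push_neg at h
    obtain ⟨i, hi⟩ := h
    exact Finset.prod_eq_zero (Finset.mem_univ i) ((h01 i (σ i)).resolve_right hi)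

def extPerm (m : ℕ) (τ : Equiv.Perm (Fin m)) : Equiv.Perm (Fin (m+1)) where
  toFun x := if h : (x : ℕ) < m then (τ ⟨x, h⟩).castSucc else x
  invFun x := if h : (x : ℕ) < m then (τ.symm ⟨x, h⟩).castSucc else x
  left_inv x := by
    dsimp only
    by_cases h : (x : ℕ) < m
    · rw [dif_pos h, dif_pos (by simpa using (τ ⟨x, h⟩).isLt)]
      simp [Fin.ext_iff]
    · rw [dif_neg h, dif_neg h]
  right_inv x := by
    dsimp only
    by_cases h : (x : ℕ) < m
    · rw [dif_pos h, dif_pos (by simpa using (τ.symm ⟨x, h⟩).isLt)]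
      simp [Fin.ext_iff]
    · rw [dif_neg h, dif_neg h]

lemma extPerm_castSucc (m : ℕ) (τ : Equiv.Perm (Fin m)) (j : Fin m) :
    extPerm m τ j.castSucc = (τ j).castSucc := by
  simp [extPerm, Equiv.coe_fn_mk, dif_pos j.isLt, Fin.ext_iff]

lemma extPerm_last (m : ℕ) (τ : Equiv.Perm (Fin m)) :
    extPerm m τ (Fin.last m) = Fin.last m := by
  simp [extPerm]

lemma extPerm_inv (m : ℕ) (τ : Equiv.Perm (Fin m)) :
    (extPerm m τ)⁻¹ = extPerm m τ⁻¹ := rfl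

lemma extPerm_injective (m : ℕ) : Function.Injective (extPerm m) := by
  intro τ τ' h
  refine Equiv.ext fun j => ?_
  have := DFunLike.congr_fun h j.castSucc
  rw [extPerm_castSucc, extPerm_castSucc] at this
  exact Fin.castSucc_injective _ this

def restrictPerm (m : ℕ) (σ : Equiv.Perm (Fin (m+1)))
    (hσ : σ (Fin.last m) = Fin.last m) : Equiv.Perm (Fin m) where
  toFun j := (σ j.castSucc).castPred (by
    intro hh
    exact (Fin.castSucc_lt_last j).ne (σ.injective (hh.trans hσ.symm)))
  invFun j := (σ.symm j.castSucc).castPred (by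
    intro hh
    have : σ (Fin.last m) = j.castSucc := by
      rw [← hh, Equiv.apply_symm_apply]
    rw [hσ] at this
    exact (Fin.castSucc_lt_last j).ne this.symm)
  left_inv j := by
    simp [Fin.castSucc_castPred, Fin.ext_iff]
  right_inv j := by
    simp [Fin.castSucc_castPred, Fin.ext_iff]

lemma extPerm_restrictPerm (m : ℕ) (σ : Equiv.Perm (Fin (m+1)))
    (hσ : σ (Fin.last m) = Fin.last m) :
    extPerm m (restrictPerm m σ hσ) = σ := by
  refine Equiv.ext fun x => ?_
  induction x using Fin.lastCases with
  | last => rw [extPerm_last, hσ]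
  | cast j =>
    rw [extPerm_castSucc]
    simp [restrictPerm, Fin.castSucc_castPred]

lemma perm_apply_inv_self {α : Type*} (f : Equiv.Perm α) (x : α) : f (f⁻¹ x) = x :=
  f.apply_symm_apply x

lemma perm_inv_apply_self {α : Type*} (f : Equiv.Perm α) (x : α) : f⁻¹ (f x) = x :=
  f.symm_apply_apply x

def swapExt (k : ℕ) (τ : Equiv.Perm (Fin (k+1))) : Equiv.Perm (Fin (k+2)) :=
  Equiv.swap ((Fin.last k).castSucc) (Fin.last (k+1)) * extPerm (k+1) τ


/-- With `A′` the bicontraction of `A` at its last row,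
`2·perm(A′) = 2·perm(A) − |Y₃|`; in particular, if no row other than the last has a
`1` in both of the last two columns, then `perm(A′) = perm(A)`. -/
theorem statement3 (n : ℕ) (hn : 2 ≤ n) (A : Matrix (Fin n) (Fin n) ℕ)
    (h01 : ∀ i j, A i j = 0 ∨ A i j = 1)
    (hrow : ∀ j : Fin n, A (lastIdx n hn) j ≠ 0 ↔ (j = sndIdx n hn ∨ j = lastIdx n hn)) :
    (2 * (perm (n-1) (bicontractMatrix n hn A)) : ℤ)
        = 2 * (perm n A : ℤ) -
          (({σ : Equiv.Perm (Fin n) |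
            (∀ i, A i (σ i) = 1) ∧
            ((σ (lastIdx n hn) = sndIdx n hn ∧ A (σ⁻¹ (lastIdx n hn)) (sndIdx n hn) = 1) ∨
             (σ (lastIdx n hn) = lastIdx n hn ∧ A (σ⁻¹ (sndIdx n hn)) (lastIdx n hn) = 1))}).ncard : ℤ) ∧
    ((∀ j : Fin n, j ≠ lastIdx n hn →
        ¬ (A j (sndIdx n hn) = 1 ∧ A j (lastIdx n hn) = 1)) →
      perm (n-1) (bicontractMatrix n hn A) = perm n A) := by
  obtain ⟨k, rfl⟩ : ∃ k, n = k + 2 := ⟨n - 2, by omega⟩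
  show (2 * (perm (k+1) (bicontractMatrix (k+2) hn A)) : ℤ)
        = 2 * (perm (k+2) A : ℤ) -
          (({σ : Equiv.Perm (Fin (k+2)) |
            (∀ i, A i (σ i) = 1) ∧
            ((σ (lastIdx (k+2) hn) = sndIdx (k+2) hn ∧ A (σ⁻¹ (lastIdx (k+2) hn)) (sndIdx (k+2) hn) = 1) ∨
             (σ (lastIdx (k+2) hn) = lastIdx (k+2) hn ∧ A (σ⁻¹ (sndIdx (k+2) hn)) (lastIdx (k+2) hn) = 1))}).ncard : ℤ) ∧
    ((∀ j : Fin (k+2), j ≠ lastIdx (k+2) hn →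
        ¬ (A j (sndIdx (k+2) hn) = 1 ∧ A j (lastIdx (k+2) hn) = 1)) →
      perm (k+1) (bicontractMatrix (k+2) hn A) = perm (k+2) A)
  have hL : lastIdx (k+2) hn = Fin.last (k+1) := rfl
  have hP : sndIdx (k+2) hn = (Fin.last k).castSucc := rfl
  simp only [hL, hP] at hrow
  have hPL : (Fin.last k).castSucc ≠ Fin.last (k+1) := (Fin.castSucc_lt_last _).ne
  have hALL : A (Fin.last (k+1)) (Fin.last (k+1)) = 1 :=
    (h01 _ _).resolve_left (by simpa using (hrow _).mpr (Or.inr rfl))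
  have hALP : A (Fin.last (k+1)) ((Fin.last k).castSucc) = 1 :=
    (h01 _ _).resolve_left (by simpa using (hrow _).mpr (Or.inl rfl))
  have hA'ite : ∀ (j i : Fin (k+1)), bicontractMatrix (k+2) hn A j i
      = if (i : ℕ) = k then
          max (A j.castSucc ((Fin.last k).castSucc)) (A j.castSucc (Fin.last (k+1)))
        else A j.castSucc i.castSucc := fun _ _ => rfl
  have hlast_iff : ∀ i : Fin (k+1), (i : ℕ) = k ↔ i = Fin.last k :=
    fun i => ⟨fun h => Fin.ext h, fun h => by rw [h]; exact Fin.val_last k⟩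
  have h01' : ∀ (i j : Fin (k+1)),
      bicontractMatrix (k+2) hn A i j = 0 ∨ bicontractMatrix (k+2) hn A i j = 1 := by
    intro i j
    rw [hA'ite]
    split
    · rcases h01 i.castSucc ((Fin.last k).castSucc) with h | h <;>
        rcases h01 i.castSucc (Fin.last (k+1)) with h' | h' <;> simp [h, h']
    · exact h01 _ _
  -- the finsets
  set S := Finset.univ.filter (fun σ : Equiv.Perm (Fin (k+2)) => ∀ i, A i (σ i) = 1)
    with hSdef
  set S' := Finset.univ.filter
      (fun τ : Equiv.Perm (Fin (k+1)) => ∀ j : Fin (k+1), bicontractMatrix (k+2) hn A j (τ j) = 1)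
    with hS'def
  set T₁ := S'.filter (fun τ => A (τ⁻¹ (Fin.last k)).castSucc ((Fin.last k).castSucc) = 1)
    with hT1def
  set T₂ := S'.filter (fun τ => A (τ⁻¹ (Fin.last k)).castSucc (Fin.last (k+1)) = 1)
    with hT2def
  have hmem_S : ∀ σ : Equiv.Perm (Fin (k+2)), σ ∈ S ↔ ∀ i, A i (σ i) = 1 := by
    intro σ; rw [hSdef]; simp
  have hmem_S' : ∀ τ : Equiv.Perm (Fin (k+1)),
      τ ∈ S' ↔ ∀ j : Fin (k+1), bicontractMatrix (k+2) hn A j (τ j) = 1 := by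
    intro τ; rw [hS'def]; simp
  have hmem_T₁ : ∀ τ, τ ∈ T₁ ↔
      (τ ∈ S' ∧ A (τ⁻¹ (Fin.last k)).castSucc ((Fin.last k).castSucc) = 1) := by
    intro τ; rw [hT1def]; exact Finset.mem_filter
  have hmem_T₂ : ∀ τ, τ ∈ T₂ ↔
      (τ ∈ S' ∧ A (τ⁻¹ (Fin.last k)).castSucc (Fin.last (k+1)) = 1) := by
    intro τ; rw [hT2def]; exact Finset.mem_filter
  -- computations for swapExt
  have hswF : ∀ (τ : Equiv.Perm (Fin (k+1))) (j : Fin (k+1)),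
      swapExt k τ j.castSucc
        = if τ j = Fin.last k then Fin.last (k+1) else (τ j).castSucc := by
    intro τ j
    unfold swapExt
    rw [Equiv.Perm.mul_apply, extPerm_castSucc]
    by_cases hj : τ j = Fin.last k
    · rw [if_pos hj, hj, Equiv.swap_apply_left]
    · rw [if_neg hj]
      exact Equiv.swap_apply_of_ne_of_ne
        (fun hc => hj (Fin.castSucc_injective _ hc)) (Fin.castSucc_lt_last _).ne
  have hswFlast : ∀ τ, swapExt k τ (Fin.last (k+1)) = (Fin.last k).castSucc := by
    intro τ
    unfold swapExt
    rw [Equiv.Perm.mul_apply, extPerm_last, Equiv.swap_apply_right]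
  have hinv1 : ∀ τ : Equiv.Perm (Fin (k+1)),
      (extPerm (k+1) τ)⁻¹ ((Fin.last k).castSucc) = (τ⁻¹ (Fin.last k)).castSucc := by
    intro τ
    rw [extPerm_inv]
    exact extPerm_castSucc (k+1) τ⁻¹ (Fin.last k)
  have hinv2 : ∀ τ : Equiv.Perm (Fin (k+1)),
      (swapExt k τ)⁻¹ (Fin.last (k+1)) = (τ⁻¹ (Fin.last k)).castSucc := by
    intro τ
    unfold swapExt
    rw [mul_inv_rev, Equiv.Perm.mul_apply, Equiv.swap_inv, Equiv.swap_apply_right,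
      extPerm_inv]
    exact extPerm_castSucc (k+1) τ⁻¹ (Fin.last k)
  -- membership characterizations
  have mem1 : ∀ τ : Equiv.Perm (Fin (k+1)), extPerm (k+1) τ ∈ S ↔ τ ∈ T₁ := by
    intro τ
    rw [hmem_S, hmem_T₁, hmem_S']
    constructor
    · intro h
      have hrowj : ∀ j : Fin (k+1), A j.castSucc ((τ j).castSucc) = 1 := by
        intro j
        have := h j.castSucc
        rwa [extPerm_castSucc] at this
      refine ⟨fun j => ?_, ?_⟩
      · rw [hA'ite]
        by_cases hj : τ j = Fin.last k
        · rw [if_pos (show ((τ j : Fin (k+1)) : ℕ) = k by rw [hj]; exact Fin.val_last k)]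
          have h1 : A j.castSucc ((Fin.last k).castSucc) = 1 := by
            rw [← hj]; exact hrowj j
          rcases h01 j.castSucc (Fin.last (k+1)) with h2 | h2 <;> omega
        · rw [if_neg (fun hc => hj ((hlast_iff _).mp hc))]
          exact hrowj j
      · have := hrowj (τ⁻¹ (Fin.last k))
        rwa [perm_apply_inv_self] at this
    · rintro ⟨hS', hc⟩
      intro i
      induction i using Fin.lastCases with
      | last => rw [extPerm_last]; exact hALL
      | cast j =>
        rw [extPerm_castSucc]
        by_cases hj : τ j = Fin.last k
        · have hji : j = τ⁻¹ (Fin.last k) := by rw [← hj, perm_inv_apply_self]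
          rw [hj, hji]; exact hc
        · have h2 := hS' j
          rwa [hA'ite, if_neg (fun hc' => hj ((hlast_iff _).mp hc'))] at h2
  have mem2 : ∀ τ : Equiv.Perm (Fin (k+1)), swapExt k τ ∈ S ↔ τ ∈ T₂ := by
    intro τ
    rw [hmem_S, hmem_T₂, hmem_S']
    constructor
    · intro h
      refine ⟨fun j => ?_, ?_⟩
      · rw [hA'ite]
        by_cases hj : τ j = Fin.last k
        · rw [if_pos (show ((τ j : Fin (k+1)) : ℕ) = k by rw [hj]; exact Fin.val_last k)]
          have h2 : A j.castSucc (Fin.last (k+1)) = 1 := by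
            have := h j.castSucc; rwa [hswF, if_pos hj] at this
          rcases h01 j.castSucc ((Fin.last k).castSucc) with h1 | h1 <;> omega
        · rw [if_neg (fun hc => hj ((hlast_iff _).mp hc))]
          have := h j.castSucc
          rwa [hswF, if_neg hj] at this
      · have := h (τ⁻¹ (Fin.last k)).castSucc
        rwa [hswF, if_pos (perm_apply_inv_self τ _)] at this
    · rintro ⟨hS', hc⟩
      intro i
      induction i using Fin.lastCases with
      | last => rw [hswFlast]; exact hALP
      | cast j =>
        rw [hswF]
        by_cases hj : τ j = Fin.last k
        · rw [if_pos hj]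
          have hji : j = τ⁻¹ (Fin.last k) := by rw [← hj, perm_inv_apply_self]
          rw [hji]; exact hc
        · rw [if_neg hj]
          have h2 := hS' j
          rwa [hA'ite, if_neg (fun hc' => hj ((hlast_iff _).mp hc'))] at h2
  have hinj2 : Function.Injective (swapExt k) := by
    intro a b hab
    unfold swapExt at hab
    exact extPerm_injective _ (mul_left_cancel hab)
  have hdisj : ∀ s t : Finset (Equiv.Perm (Fin (k+1))),
      Disjoint (s.image (extPerm (k+1))) (t.image (swapExt k)) := by
    intro s t
    rw [Finset.disjoint_left]
    intro σ hσ1 hσ2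
    obtain ⟨τ, -, rfl⟩ := Finset.mem_image.mp hσ1
    obtain ⟨τ', -, he⟩ := Finset.mem_image.mp hσ2
    have h2 := hswFlast τ'
    rw [he, extPerm_last] at h2
    exact hPL h2.symm
  have hS_eq : S = T₁.image (extPerm (k+1)) ∪ T₂.image (swapExt k) := by
    ext σ
    rw [Finset.mem_union, Finset.mem_image, Finset.mem_image]
    constructor
    · intro hσ
      have hσ1 := (hmem_S σ).mp hσ
      have hσL : σ (Fin.last (k+1)) = (Fin.last k).castSucc
          ∨ σ (Fin.last (k+1)) = Fin.last (k+1) := by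
        have h1 : A (Fin.last (k+1)) (σ (Fin.last (k+1))) = 1 := hσ1 _
        exact (hrow _).mp (by rw [h1]; exact one_ne_zero)
      rcases hσL with h | h
      · right
        have hfix : (Equiv.swap ((Fin.last k).castSucc) (Fin.last (k+1)) * σ)
            (Fin.last (k+1)) = Fin.last (k+1) := by
          rw [Equiv.Perm.mul_apply, h, Equiv.swap_apply_left]
        have hre : swapExt k (restrictPerm (k+1) _ hfix) = σ := by
          unfold swapExt
          rw [extPerm_restrictPerm, ← mul_assoc, Equiv.swap_mul_self, one_mul]
        exact ⟨restrictPerm (k+1) _ hfix, (mem2 _).mp (by rw [hre]; exact hσ), hre⟩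
      · left
        exact ⟨restrictPerm (k+1) σ h,
          (mem1 _).mp (by rw [extPerm_restrictPerm]; exact hσ),
          extPerm_restrictPerm (k+1) σ h⟩
    · rintro (⟨τ, hτ, rfl⟩ | ⟨τ, hτ, rfl⟩)
      · exact (mem1 τ).mpr hτ
      · exact (mem2 τ).mpr hτ
  have hScard : S.card = T₁.card + T₂.card := by
    rw [hS_eq, Finset.card_union_of_disjoint (hdisj _ _),
      Finset.card_image_of_injective _ (extPerm_injective (k+1)),
      Finset.card_image_of_injective _ hinj2]
  have hS'union : S' = T₁ ∪ T₂ := by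
    ext τ
    rw [Finset.mem_union, hmem_T₁, hmem_T₂]
    constructor
    · intro h
      have h2 := (hmem_S' τ).mp h (τ⁻¹ (Fin.last k))
      rw [perm_apply_inv_self, hA'ite,
        if_pos (show ((Fin.last k : Fin (k+1)) : ℕ) = k from Fin.val_last k)] at h2
      rcases h01 (τ⁻¹ (Fin.last k)).castSucc ((Fin.last k).castSucc) with ha | ha
      · right; exact ⟨h, by omega⟩
      · left; exact ⟨h, ha⟩
    · rintro (⟨h, -⟩ | ⟨h, -⟩) <;> exact h
  have hIE : S'.card + (T₁ ∩ T₂).card = T₁.card + T₂.card := by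
    rw [hS'union]; exact Finset.card_union_add_card_inter _ _
  set Y := Finset.univ.filter (fun σ : Equiv.Perm (Fin (k+2)) =>
    (∀ i, A i (σ i) = 1) ∧
    ((σ (Fin.last (k+1)) = (Fin.last k).castSucc
        ∧ A (σ⁻¹ (Fin.last (k+1))) ((Fin.last k).castSucc) = 1) ∨
     (σ (Fin.last (k+1)) = Fin.last (k+1)
        ∧ A (σ⁻¹ ((Fin.last k).castSucc)) (Fin.last (k+1)) = 1))) with hYdef
  have hY_eq : Y = (T₁ ∩ T₂).image (extPerm (k+1)) ∪ (T₁ ∩ T₂).image (swapExt k) := by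
    ext σ
    rw [Finset.mem_union, Finset.mem_image, Finset.mem_image, hYdef, Finset.mem_filter]
    constructor
    · rintro ⟨-, h1, h2⟩
      have hσS : σ ∈ S := (hmem_S σ).mpr h1
      rw [hS_eq, Finset.mem_union, Finset.mem_image, Finset.mem_image] at hσS
      rcases hσS with ⟨τ, hτ, rfl⟩ | ⟨τ, hτ, rfl⟩
      · left
        rcases h2 with ⟨hc, -⟩ | ⟨-, hc⟩
        · exact absurd ((extPerm_last (k+1) τ).symm.trans hc) (Ne.symm hPL)
        · rw [hinv1 τ] at hc
          exact ⟨τ, Finset.mem_inter.mpr ⟨hτ, (hmem_T₂ τ).mpr ⟨((hmem_T₁ τ).mp hτ).1, hc⟩⟩, rfl⟩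
      · right
        rcases h2 with ⟨-, hc⟩ | ⟨hc, -⟩
        · rw [hinv2 τ] at hc
          exact ⟨τ, Finset.mem_inter.mpr ⟨(hmem_T₁ τ).mpr ⟨((hmem_T₂ τ).mp hτ).1, hc⟩, hτ⟩, rfl⟩
        · exact absurd ((hswFlast τ).symm.trans hc) hPL
    · rintro (⟨τ, hτ, rfl⟩ | ⟨τ, hτ, rfl⟩)
      · obtain ⟨hτ1, hτ2⟩ := Finset.mem_inter.mp hτ
        refine ⟨Finset.mem_univ _, (hmem_S _).mp ((mem1 τ).mpr hτ1),
          Or.inr ⟨extPerm_last (k+1) τ, ?_⟩⟩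
        rw [hinv1 τ]
        exact ((hmem_T₂ τ).mp hτ2).2
      · obtain ⟨hτ1, hτ2⟩ := Finset.mem_inter.mp hτ
        refine ⟨Finset.mem_univ _, (hmem_S _).mp ((mem2 τ).mpr hτ2),
          Or.inl ⟨hswFlast τ, ?_⟩⟩
        rw [hinv2 τ]
        exact ((hmem_T₁ τ).mp hτ1).2
  have hYcard : Y.card = 2 * (T₁ ∩ T₂).card := by
    rw [hY_eq, Finset.card_union_of_disjoint (hdisj _ _),
      Finset.card_image_of_injective _ (extPerm_injective (k+1)),
      Finset.card_image_of_injective _ hinj2]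
    ring
  have hYncard : ({σ : Equiv.Perm (Fin (k+2)) |
      (∀ i, A i (σ i) = 1) ∧
      ((σ (lastIdx (k+2) hn) = sndIdx (k+2) hn
          ∧ A (σ⁻¹ (lastIdx (k+2) hn)) (sndIdx (k+2) hn) = 1) ∨
       (σ (lastIdx (k+2) hn) = lastIdx (k+2) hn
          ∧ A (σ⁻¹ (sndIdx (k+2) hn)) (lastIdx (k+2) hn) = 1))}).ncard = Y.card := by
    rw [← Set.ncard_coe_finset Y]
    congr 1
    ext σ
    rw [hYdef]
    simp only [hL, hP, Finset.coe_filter, Finset.mem_univ, true_and, Set.mem_setOf_eq]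
  constructor
  · rw [perm_eq_card_aux (k+1) (bicontractMatrix (k+2) hn A) h01',
      perm_eq_card_aux (k+2) A h01, hYncard, ← hSdef, ← hS'def]
    omega
  · intro hnone
    have hT12 : (T₁ ∩ T₂).card = 0 := by
      rw [Finset.card_eq_zero, Finset.eq_empty_iff_forall_notMem]
      intro τ hτ
      obtain ⟨hτ1, hτ2⟩ := Finset.mem_inter.mp hτ
      have h1 := ((hmem_T₁ τ).mp hτ1).2
      have h2 := ((hmem_T₂ τ).mp hτ2).2
      exact hnone (τ⁻¹ (Fin.last k)).castSucc
        (by rw [hL]; exact (Fin.castSucc_lt_last _).ne)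
        ⟨by rw [hP]; exact h1, by rw [hL]; exact h2⟩
    rw [perm_eq_card_aux (k+1) (bicontractMatrix (k+2) hn A) h01',
      perm_eq_card_aux (k+2) A h01, ← hSdef, ← hS'def]
    omega


end PaperMM
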